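/- Let (X,Y) be a mean-zero bivariate Gaussian vector with Var(X) = Var(Y) = 1 and correlation ρ. Then E[|X||Y|] = (2/π)(ρ·arcsin(ρ) + sqrt(1-ρ²)). -/

import Mathlib

open MeasureTheory ProbabilityTheory Real Set
open scoped NNReal ENNReal

open MeasureTheory Real Set

lemma radial_int : ∫ r in Ioi (0:ℝ), r ^ 3 * rexp (-r ^ 2 / 2) = 2 := by
  have hderiv : ∀ x ∈ Ici (0:ℝ),
      HasDerivAt (fun r : ℝ => -(r ^ 2 + 2) * rexp (-r ^ 2 / 2)) (x ^ 3 * rexp (-x ^ 2 / 2)) x := by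
    intro x _
    have h1 : HasDerivAt (fun r : ℝ => -r ^ 2 / 2) (-x) x := by
      have := ((hasDerivAt_pow 2 x).neg).div_const 2
      exact this.congr_deriv (by norm_num; ring)
    have h2 := h1.exp
    have h3 : HasDerivAt (fun r : ℝ => -(r ^ 2 + 2)) (-(2 * x)) x := by
      have := ((hasDerivAt_pow 2 x).add_const 2).neg
      exact this.congr_deriv (by norm_num)
    exact (h3.mul h2).congr_deriv (by ring)
  have hint : IntegrableOn (fun r : ℝ => r ^ 3 * rexp (-r ^ 2 / 2)) (Ioi 0) := by
    have := integrableOn_rpow_mul_exp_neg_mul_sq (b := 1/2) (by norm_num) (s := 3) (by norm_num)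
    refine this.congr_fun (fun x hx => ?_) measurableSet_Ioi
    dsimp only
    rw [show ((3:ℝ)) = ((3:ℕ):ℝ) by norm_num, Real.rpow_natCast]
    congr 1
    ring
  have htend : Filter.Tendsto (fun r : ℝ => -(r ^ 2 + 2) * rexp (-r ^ 2 / 2)) Filter.atTop (nhds 0) := by
    have h0 : Filter.Tendsto (fun r : ℝ => r ^ 2 / 2) Filter.atTop Filter.atTop := by
      apply Filter.Tendsto.atTop_div_const (by norm_num)
      exact Filter.tendsto_pow_atTop (two_ne_zero)
    have h1 : Filter.Tendsto (fun u : ℝ => -(2 * u + 2) * rexp (-u)) Filter.atTop (nhds 0) := by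
      have ha : Filter.Tendsto (fun u : ℝ => u ^ 1 * rexp (-u)) Filter.atTop (nhds 0) :=
        tendsto_pow_mul_exp_neg_atTop_nhds_zero 1
      have hb : Filter.Tendsto (fun u : ℝ => rexp (-u)) Filter.atTop (nhds 0) := by
        simpa using Real.tendsto_exp_comp_nhds_zero.mpr Filter.tendsto_neg_atTop_atBot
      have := ((ha.const_mul (-2)).sub (hb.const_mul 2))
      simp only [mul_zero, sub_zero, pow_one] at this ⊢
      convert this using 2 with u
      ring
    have := h1.comp h0
    refine this.congr fun r => ?_
    simp only [Function.comp_apply]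
    congr 1 <;> ring
  have := integral_Ioi_of_hasDerivAt_of_tendsto' hderiv hint htend
  rw [this]; norm_num
open MeasureTheory Real Set intervalIntegral

lemma key_deriv (c t : ℝ) :
    HasDerivAt (fun t : ℝ => t * cos c / 2 - sin (2 * t + c) / 4) (sin (t + c) * sin t) t := by
  have h1 : HasDerivAt (fun t : ℝ => 2 * t + c) 2 t := by
    simpa using ((hasDerivAt_id t).const_mul 2).add_const c
  have h2 := (h1.sin).div_const 4
  have h3 := (((hasDerivAt_id t).mul_const (cos c)).div_const 2)
  have h4 := h3.sub h2
  refine h4.congr_deriv ?_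
  have hc := Real.cos_sub_cos c (2 * t + c)
  have h5 : (c + (2 * t + c)) / 2 = t + c := by ring
  have h6 : (c - (2 * t + c)) / 2 = -t := by ring
  rw [h5, h6, Real.sin_neg] at hc
  -- hc : cos c - cos (2*t+c) = -2 * sin (t+c) * -sin t
  ring_nf
  ring_nf at hc
  linarith

lemma sin_prod_integral (c a b : ℝ) :
    ∫ t in a..b, sin (t + c) * sin t =
      (b * cos c / 2 - sin (2 * b + c) / 4) - (a * cos c / 2 - sin (2 * a + c) / 4) := by
  apply intervalIntegral.integral_eq_sub_of_hasDerivAt (fun t _ => key_deriv c t)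
  apply Continuous.intervalIntegrable
  continuity

lemma angular (φ : ℝ) (h0 : 0 ≤ φ) (hπ : φ ≤ π) :
    ∫ θ in (0:ℝ)..π, |sin (θ + φ)| * sin θ = (π / 2 - φ) * cos φ + sin φ := by
  have hsplit : ∫ θ in (0:ℝ)..π, |sin (θ + φ)| * sin θ =
      (∫ θ in (0:ℝ)..(π - φ), |sin (θ + φ)| * sin θ)
        + ∫ θ in (π - φ)..π, |sin (θ + φ)| * sin θ := by
    rw [intervalIntegral.integral_add_adjacent_intervals] <;>
      exact (Continuous.intervalIntegrable (by continuity) _ _)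
  have h1 : ∫ θ in (0:ℝ)..(π - φ), |sin (θ + φ)| * sin θ
      = ∫ θ in (0:ℝ)..(π - φ), sin (θ + φ) * sin θ := by
    apply intervalIntegral.integral_congr
    intro θ hθ
    rw [uIcc_of_le (by linarith)] at hθ
    have : 0 ≤ sin (θ + φ) := sin_nonneg_of_nonneg_of_le_pi (by linarith [hθ.1]) (by linarith [hθ.2])
    simp [abs_of_nonneg this]
  have h2 : ∫ θ in (π - φ)..π, |sin (θ + φ)| * sin θ
      = ∫ θ in (π - φ)..π, -(sin (θ + φ) * sin θ) := by
    apply intervalIntegral.integral_congr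
    intro θ hθ
    rw [uIcc_of_le (by linarith)] at hθ
    have hs : sin (θ + φ) ≤ 0 := by
      have : sin (θ + φ - π) ≥ 0 :=
        sin_nonneg_of_nonneg_of_le_pi (by linarith [hθ.1]) (by linarith [hθ.2])
      rw [Real.sin_sub_pi] at this
      linarith
    dsimp only
    rw [abs_of_nonpos hs]
    ring
  rw [hsplit, h1, h2, intervalIntegral.integral_neg, sin_prod_integral, sin_prod_integral]
  have e1 : 2 * (π - φ) + φ = 2 * π - φ := by ring
  have e2 : 2 * π + φ = φ + 2 * π := by ring
  rw [e1, e2, Real.sin_add_two_pi]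
  have e3 : sin (2 * π - φ) = -sin φ := by
    rw [show 2 * π - φ = -(φ - 2*π) by ring, Real.sin_neg, Real.sin_sub_two_pi]
  rw [e3]
  simp only [Real.sin_zero, zero_mul, mul_zero]
  ring

lemma angular_full (φ : ℝ) (h0 : 0 ≤ φ) (hπ : φ ≤ π) :
    ∫ θ in (-π)..π, |sin (θ + φ)| * |sin θ| = 2 * ((π / 2 - φ) * cos φ + sin φ) := by
  have hsplit : ∫ θ in (-π)..π, |sin (θ + φ)| * |sin θ| =
      (∫ θ in (-π)..(0:ℝ), |sin (θ + φ)| * |sin θ|)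
        + ∫ θ in (0:ℝ)..π, |sin (θ + φ)| * |sin θ| := by
    rw [intervalIntegral.integral_add_adjacent_intervals] <;>
      exact (Continuous.intervalIntegrable (by continuity) _ _)
  have hneg : ∫ θ in (-π)..(0:ℝ), |sin (θ + φ)| * |sin θ|
      = ∫ θ in (0:ℝ)..π, |sin (θ + φ)| * |sin θ| := by
    have := intervalIntegral.integral_comp_sub_right
      (a := (0:ℝ)) (b := π) (fun θ => |sin (θ + φ)| * |sin θ|) π
    rw [show (0:ℝ) - π = -π by ring, show π - π = (0:ℝ) by ring] at this
    rw [← this]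
    apply intervalIntegral.integral_congr
    intro θ _
    dsimp only
    rw [show θ - π + φ = θ + φ - π by ring, Real.sin_sub_pi, Real.sin_sub_pi, abs_neg, abs_neg]
  have habs : ∫ θ in (0:ℝ)..π, |sin (θ + φ)| * |sin θ|
      = ∫ θ in (0:ℝ)..π, |sin (θ + φ)| * sin θ := by
    apply intervalIntegral.integral_congr
    intro θ hθ
    rw [uIcc_of_le pi_nonneg] at hθ
    dsimp only
    rw [abs_of_nonneg (sin_nonneg_of_nonneg_of_le_pi hθ.1 hθ.2)]
  rw [hsplit, hneg, habs, angular φ h0 hπ]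
  ring
open MeasureTheory ProbabilityTheory Real Set
open scoped NNReal ENNReal

noncomputable def gk : ℝ → ℝ≥0 := fun x => (gaussianPDFReal 0 1 x).toNNReal

lemma gk_meas : Measurable gk := (measurable_gaussianPDFReal 0 1).real_toNNReal

lemma gk_coe (x : ℝ) : (gk x : ℝ) = (Real.sqrt (2 * π))⁻¹ * rexp (-x ^ 2 / 2) := by
  rw [gk, Real.coe_toNNReal _ (gaussianPDFReal_nonneg 0 1 x)]
  simp [gaussianPDFReal]

lemma gauss_eq : gaussianReal 0 1 = volume.withDensity (fun x => (gk x : ℝ≥0∞)) := by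
  rw [gaussianReal_of_var_ne_zero _ one_ne_zero]
  rfl

lemma gauss_prod_eq : (gaussianReal 0 1).prod (gaussianReal 0 1)
    = (volume.prod volume).withDensity (fun p => ((gk p.1 * gk p.2 : ℝ≥0) : ℝ≥0∞)) := by
  refine Measure.prod_eq fun s t hs ht => ?_
  rw [withDensity_apply _ (hs.prod ht), ← Measure.prod_restrict]
  simp_rw [ENNReal.coe_mul]
  rw [lintegral_prod_mul (gk_meas.coe_nnreal_ennreal.aemeasurable)
    (gk_meas.coe_nnreal_ennreal.aemeasurable)]
  rw [gauss_eq, withDensity_apply _ hs, withDensity_apply _ ht]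

lemma integral_gauss_prod (f : ℝ × ℝ → ℝ) :
    ∫ p, f p ∂((gaussianReal 0 1).prod (gaussianReal 0 1))
      = ∫ p : ℝ × ℝ, ((gk p.1 : ℝ) * (gk p.2 : ℝ)) * f p := by
  have hm : Measurable (fun q : ℝ × ℝ => gk q.1 * gk q.2) :=
    (gk_meas.comp measurable_fst).mul (gk_meas.comp measurable_snd)
  rw [gauss_prod_eq, integral_withDensity_eq_integral_smul hm f, ← Measure.volume_eq_prod]
  simp [NNReal.smul_def]


lemma polar_symm_eq (p : ℝ × ℝ) : polarCoord.symm p = (p.1 * cos p.2, p.1 * sin p.2) := rfl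

lemma polar_target_eq : polarCoord.target = Ioi (0 : ℝ) ×ˢ Ioo (-π) π := rfl

theorem nabeya_abs_moment_bivariate_gaussian
    {Ω : Type*} [MeasurableSpace Ω] (μ : Measure Ω) [IsProbabilityMeasure μ]
    (Z₁ Z₂ : Ω → ℝ) (hZ₁ : Measurable Z₁) (hZ₂ : Measurable Z₂)
    (hZ₁law : Measure.map Z₁ μ = gaussianReal 0 1)
    (hZ₂law : Measure.map Z₂ μ = gaussianReal 0 1)
    (hindep : IndepFun Z₁ Z₂ μ)
    (ρ : ℝ) (hρ : ρ ∈ Set.Icc (-1 : ℝ) 1)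
    (X Y : Ω → ℝ)
    (hX : X = fun ω => Real.sqrt (1 - ρ ^ 2) * Z₁ ω + ρ * Z₂ ω)
    (hY : Y = Z₂) :
    ∫ ω, |X ω| * |Y ω| ∂μ = (2 / π) * (ρ * arcsin ρ + Real.sqrt (1 - ρ ^ 2)) := by
  subst hX hY
  obtain ⟨hρ1, hρ2⟩ := hρ
  set a : ℝ := Real.sqrt (1 - ρ ^ 2) with ha
  have ha0 : 0 ≤ a := Real.sqrt_nonneg _
  set f : ℝ × ℝ → ℝ := fun p => |a * p.1 + ρ * p.2| * |p.2| with hf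
  have hfc : Continuous f := by
    apply Continuous.mul
    · exact ((continuous_const.mul continuous_fst).add
        (continuous_const.mul continuous_snd)).abs
    · exact continuous_snd.abs
  have hmap : μ.map (fun ω => (Z₁ ω, Y ω)) = (gaussianReal 0 1).prod (gaussianReal 0 1) := by
    rw [(indepFun_iff_map_prod_eq_prod_map_map hZ₁.aemeasurable hZ₂.aemeasurable).mp hindep,
      hZ₁law, hZ₂law]
  have step1 : ∫ ω, |a * Z₁ ω + ρ * Y ω| * |Y ω| ∂μ
      = ∫ p, f p ∂((gaussianReal 0 1).prod (gaussianReal 0 1)) := by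
    rw [← hmap, integral_map (hZ₁.prodMk hZ₂).aemeasurable hfc.aestronglyMeasurable]
  rw [step1, integral_gauss_prod f]
  -- polar coordinates
  rw [← integral_comp_polarCoord_symm]
  have hcongr : ∫ p in polarCoord.target,
        p.1 • (((gk (polarCoord.symm p).1 : ℝ) * (gk (polarCoord.symm p).2 : ℝ))
          * f (polarCoord.symm p))
      = ∫ p in polarCoord.target,
        ((2 * π)⁻¹ * (p.1 ^ 3 * rexp (-p.1 ^ 2 / 2)))
          * (|a * cos p.2 + ρ * sin p.2| * |sin p.2|) := by
    apply setIntegral_congr_fun polarCoord.open_target.measurableSet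
    intro p hp
    rw [polar_target_eq] at hp
    obtain ⟨hr, -⟩ := hp
    rw [mem_Ioi] at hr
    simp only [polar_symm_eq, f]
    rw [gk_coe, gk_coe]
    have h2 : |a * (p.1 * cos p.2) + ρ * (p.1 * sin p.2)| = p.1 * |a * cos p.2 + ρ * sin p.2| := by
      rw [show a * (p.1 * cos p.2) + ρ * (p.1 * sin p.2)
          = p.1 * (a * cos p.2 + ρ * sin p.2) by ring, abs_mul, abs_of_pos hr]
    have h3 : |p.1 * sin p.2| = p.1 * |sin p.2| := by
      rw [abs_mul, abs_of_pos hr]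
    rw [h2, h3, smul_eq_mul]
    have h1 : rexp (-(p.1 * cos p.2) ^ 2 / 2) * rexp (-(p.1 * sin p.2) ^ 2 / 2)
        = rexp (-p.1 ^ 2 / 2) := by
      rw [← Real.exp_add]
      congr 1
      have := Real.sin_sq_add_cos_sq p.2
      nlinarith [this]
    have hsq : (Real.sqrt (2 * π))⁻¹ * (Real.sqrt (2 * π))⁻¹ = (2 * π)⁻¹ := by
      rw [← mul_inv, Real.mul_self_sqrt (by positivity)]
    calc p.1 * ((Real.sqrt (2 * π))⁻¹ * rexp (-(p.1 * cos p.2) ^ 2 / 2)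
          * ((Real.sqrt (2 * π))⁻¹ * rexp (-(p.1 * sin p.2) ^ 2 / 2))
          * (p.1 * |a * cos p.2 + ρ * sin p.2| * (p.1 * |sin p.2|)))
        = ((Real.sqrt (2 * π))⁻¹ * (Real.sqrt (2 * π))⁻¹)
            * (rexp (-(p.1 * cos p.2) ^ 2 / 2) * rexp (-(p.1 * sin p.2) ^ 2 / 2))
            * (p.1 ^ 3 * (|a * cos p.2 + ρ * sin p.2| * |sin p.2|)) := by ring
      _ = _ := by rw [h1, hsq]; ring
  rw [hcongr, polar_target_eq, Measure.volume_eq_prod,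
    setIntegral_prod_mul (fun r => (2 * π)⁻¹ * (r ^ 3 * rexp (-r ^ 2 / 2)))
      (fun θ => |a * cos θ + ρ * sin θ| * |sin θ|)]
  -- radial integral
  have hrad : ∫ r in Ioi (0:ℝ), (2 * π)⁻¹ * (r ^ 3 * rexp (-r ^ 2 / 2)) = π⁻¹ := by
    rw [MeasureTheory.integral_const_mul, radial_int]
    rw [mul_inv]
    ring
  -- angular integral
  set φ : ℝ := Real.arccos ρ with hφ
  have hcos : cos φ = ρ := Real.cos_arccos hρ1 hρ2
  have hsin : sin φ = a := by rw [ha]; exact Real.sin_arccos ρ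
  have hφ0 : 0 ≤ φ := Real.arccos_nonneg ρ
  have hφπ : φ ≤ π := Real.arccos_le_pi ρ
  have hang : ∫ θ in Ioo (-π) π, |a * cos θ + ρ * sin θ| * |sin θ|
      = 2 * ((π / 2 - φ) * ρ + a) := by
    rw [← integral_Ioc_eq_integral_Ioo,
      ← intervalIntegral.integral_of_le (by linarith [pi_pos] : -π ≤ π)]
    have : ∀ θ : ℝ, |a * cos θ + ρ * sin θ| * |sin θ| = |sin (θ + φ)| * |sin θ| := by
      intro θ
      rw [show a * cos θ + ρ * sin θ = sin (θ + φ) by rw [Real.sin_add, hcos, hsin]; ring]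
    simp_rw [this]
    rw [angular_full φ hφ0 hφπ, hcos, hsin]
  rw [hrad, hang]
  have harc : π / 2 - φ = arcsin ρ := by
    rw [hφ, Real.arccos]
    ring
  rw [harc]
  have hπ0 : π ≠ 0 := ne_of_gt pi_pos
  field_simp
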